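/- Let ann ∈ 3^Z be fixed and define the relation t ≤ t' on tiles in T_ann by: ecc(t') ⊆ ecc(t) and R_t ∩ R_{t'} ≠ ∅; and t ≤_2 t' by: ecc(t') ⊆ ecc(t) and R_t ∩ K_n R_{t'} ≠ ∅, where K_n is the constant of the Geometric Lemma. Then: (a) if t ≤ t' ≤ t'' then t ≤_2 t''; (b) if t ≤_2 t' then R_t ⊆ K_n^2 R_{t'}. -/
import Mathlib

/-- Quasi-transitivity of the tile order.  With tiles abstracted by dilated spatial
components `Rdil t A` and eccentricity caps `ecc t`, and the Geometric Lemma `hgeom`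
(for `A ≥ 1`, nested caps and intersecting `A`-dilates force `A R_t ⊆ K_n A R_{t'}`):
(a) `t ≤ t' ≤ t''` implies `t ≤₂ t''`, i.e. `ecc t'' ⊆ ecc t` and `R_t ∩ K_n R_{t''} ≠ ∅`;
(b) `t ≤₂ t'` implies `R_t ⊆ K_n² R_{t'}`. -/
theorem stmt13 (n : ℕ) (ι : Type*)
    (Rdil : ι → ℝ → Set (Fin n → ℝ)) (ecc : ι → Set (Fin n → ℝ))
    (Kn : ℝ) (hKn : 1 ≤ Kn)
    (hmono : ∀ t : ι, ∀ A B : ℝ, A ≤ B → Rdil t A ⊆ Rdil t B)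
    (hgeom : ∀ A : ℝ, 1 ≤ A → ∀ t t' : ι, ecc t' ⊆ ecc t →
      (Rdil t A ∩ Rdil t' A).Nonempty → Rdil t A ⊆ Rdil t' (Kn * A)) :
    (∀ t t' t'' : ι,
      (ecc t' ⊆ ecc t ∧ (Rdil t 1 ∩ Rdil t' 1).Nonempty) →
      (ecc t'' ⊆ ecc t' ∧ (Rdil t' 1 ∩ Rdil t'' 1).Nonempty) →
      (ecc t'' ⊆ ecc t ∧ (Rdil t 1 ∩ Rdil t'' Kn).Nonempty)) ∧
    (∀ t t' : ι, ecc t' ⊆ ecc t → (Rdil t 1 ∩ Rdil t' Kn).Nonempty →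
      Rdil t 1 ⊆ Rdil t' (Kn ^ 2)) := by
  constructor
  · rintro t t' t'' ⟨he1, x, hx1, hx2⟩ ⟨he2, hne2⟩
    refine ⟨he2.trans he1, x, hx1, ?_⟩
    have h := hgeom 1 le_rfl t' t'' he2 hne2
    rw [mul_one] at h
    exact h hx2
  · rintro t t' he ⟨x, hx1, hx2⟩
    have hsub : Rdil t 1 ⊆ Rdil t Kn := hmono t 1 Kn hKn
    have h := hgeom Kn hKn t t' he ⟨x, hsub hx1, hx2⟩
    rw [← sq] at h
    exact hsub.trans h
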